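/- Let r, σ, b > 0 and a ∈ ℝ with a < 0, σ = −a·r and 0 < r < 1. Then the only zero of the vector field f of the Lorenz-like system (i.e., the only equilibrium) is the origin: f(x, y, z) = (0, 0, 0) implies (x, y, z) = (0, 0, 0). -/
import Mathlib


/-- For the Lorenz-like system with `a < 0`, `σ = −a·r` and `0 < r < 1`, the origin is the
only equilibrium. -/
theorem stmt_4 (r σ b a : ℝ) (hr : 0 < r) (hσ : 0 < σ) (hb : 0 < b)
    (ha : a < 0) (hσar : σ = -a * r) (hr1 : r < 1) :
    ∀ x y z : ℝ,
      (-σ * (x - y) - a * y * z, r * x - y - x * z, -b * z + x * y)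
        = ((0 : ℝ), (0 : ℝ), (0 : ℝ)) →
      (x, y, z) = ((0 : ℝ), (0 : ℝ), (0 : ℝ)) := by
  intro x y z h
  rw [Prod.ext_iff, Prod.ext_iff] at h
  obtain ⟨e1, e2, e3⟩ := h
  simp only at e1 e2 e3
  subst hσar
  have hane : a ≠ 0 := ne_of_lt ha
  have h1 : r * (x - y) - y * z = 0 := by
    have h0 : a * (r * (x - y) - y * z) = 0 := by linear_combination e1
    exact (mul_eq_zero.mp h0).resolve_left hane
  have key : r * (x - y) ^ 2 + (1 - r) * y ^ 2 = 0 := by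
    linear_combination x * h1 - y * e2
  have hy2 : y ^ 2 = 0 := by
    refine le_antisymm ?_ (sq_nonneg y)
    nlinarith [sq_nonneg (x - y), mul_nonneg hr.le (sq_nonneg (x - y))]
  have hy : y = 0 := by
    have := pow_eq_zero_iff (n := 2) (by norm_num) |>.mp hy2
    exact this
  have hx2 : x ^ 2 = 0 := by
    have : r * x ^ 2 = 0 := by rw [hy] at key; linarith [key]
    rcases mul_eq_zero.mp this with h | h
    · exact absurd h hr.ne'
    · exact h
  have hx : x = 0 := pow_eq_zero_iff (n := 2) (by norm_num) |>.mp hx2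
  have hz : z = 0 := by
    rw [hx, hy] at e3
    have : b * z = 0 := by linarith
    exact (mul_eq_zero.mp this).resolve_left hb.ne'
  simp [hx, hy, hz]
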